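/- The map ψ : D → B defined by x·ψ(d) = τ(x·d) is a bounded B-bimodule linear map, i.e., ψ(b d) = b ψ(d) and ψ(d b) = ψ(d) b for all b ∈ B, d ∈ D, and ‖ψ‖ ≤ ‖τ‖. -/

import Mathlib

/-- A pair `(X, Y)` implementing a strong Morita equivalence of unital inclusions
`A ⊆ C` and `B ⊆ D` of unital C*-algebras: `Y` is a `C`–`D`-equivalence bimodule and
`X` is a closed subspace of `Y` which is an `A`–`B`-equivalence bimodule with the
restricted actions and inner products. -/
structure MoritaPair
    (A : Type*) [NormedRing A] [StarRing A] [CStarRing A] [NormedAlgebra ℂ A]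
      [CompleteSpace A] [StarModule ℂ A]
    (C : Type*) [NormedRing C] [StarRing C] [CStarRing C] [NormedAlgebra ℂ C]
      [CompleteSpace C] [StarModule ℂ C]
    (B : Type*) [NormedRing B] [StarRing B] [CStarRing B] [NormedAlgebra ℂ B]
      [CompleteSpace B] [StarModule ℂ B]
    (D : Type*) [NormedRing D] [StarRing D] [CStarRing D] [NormedAlgebra ℂ D]
      [CompleteSpace D] [StarModule ℂ D]
    (X : Type*) [NormedAddCommGroup X] [NormedSpace ℂ X]
    (Y : Type*) [NormedAddCommGroup Y] [NormedSpace ℂ Y] [CompleteSpace Y] where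
  /-- the unital isometric *-embedding of `A` into `C` -/
  ιA : A →⋆ₐ[ℂ] C
  /-- the unital isometric *-embedding of `B` into `D` -/
  ιB : B →⋆ₐ[ℂ] D
  ιA_isometry : Isometry ιA
  ιB_isometry : Isometry ιB
  /-- the inclusion of the closed subspace `X` into `Y` -/
  incl : X →ₗ[ℂ] Y
  incl_norm : ∀ x, ‖incl x‖ = ‖x‖
  incl_closed : IsClosed (Set.range incl)
  /-- left action of `C` on `Y` -/
  lC : C → Y → Y
  lC_one : ∀ y, lC 1 y = y
  lC_mul : ∀ c c' y, lC (c * c') y = lC c (lC c' y)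
  lC_add_right : ∀ c y y', lC c (y + y') = lC c y + lC c y'
  lC_add_left : ∀ c c' y, lC (c + c') y = lC c y + lC c' y
  lC_smul : ∀ (z : ℂ) c y, lC (z • c) y = z • lC c y
  /-- right action of `D` on `Y` -/
  rD : Y → D → Y
  rD_one : ∀ y, rD y 1 = y
  rD_mul : ∀ y d d', rD y (d * d') = rD (rD y d) d'
  rD_add_left : ∀ y y' d, rD (y + y') d = rD y d + rD y' d
  rD_add_right : ∀ y d d', rD y (d + d') = rD y d + rD y d'
  rD_smul : ∀ (z : ℂ) y d, rD y (z • d) = z • rD y d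
  smul_assoc : ∀ c y d, rD (lC c y) d = lC c (rD y d)
  /-- the left `C`-valued inner product on `Y` -/
  innC : Y → Y → C
  innC_add_left : ∀ y y' z, innC (y + y') z = innC y z + innC y' z
  innC_star : ∀ y z, star (innC y z) = innC z y
  innC_lC : ∀ c y z, innC (lC c y) z = c * innC y z
  innC_norm : ∀ y, ‖innC y y‖ = ‖y‖ ^ 2
  /-- the right `D`-valued inner product on `Y` -/
  innD : Y → Y → D
  innD_add_right : ∀ y z z', innD y (z + z') = innD y z + innD y z'
  innD_star : ∀ y z, star (innD y z) = innD z y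
  innD_rD : ∀ y z d, innD y (rD z d) = innD y z * d
  innD_norm : ∀ y, ‖innD y y‖ = ‖y‖ ^ 2
  imprimitivity : ∀ y z w, lC (innC y z) w = rD y (innD z w)
  innC_full : (Submodule.span ℂ {c : C | ∃ y z, innC y z = c}).topologicalClosure = ⊤
  innD_full : (Submodule.span ℂ {d : D | ∃ y z, innD y z = d}).topologicalClosure = ⊤
  /-- left action of `A` on `X`, the restriction of the `C`-action -/
  lA : A → X → X
  lA_compat : ∀ a x, incl (lA a x) = lC (ιA a) (incl x)
  /-- right action of `B` on `X`, the restriction of the `D`-action -/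
  rB : X → B → X
  rB_compat : ∀ x b, incl (rB x b) = rD (incl x) (ιB b)
  /-- the left `A`-valued inner product on `X`, the restriction of `innC` -/
  innA : X → X → A
  innA_compat : ∀ x z, ιA (innA x z) = innC (incl x) (incl z)
  /-- the right `B`-valued inner product on `X`, the restriction of `innD` -/
  innB : X → X → B
  innB_compat : ∀ x z, ιB (innB x z) = innD (incl x) (incl z)
  innA_full : (Submodule.span ℂ {a : A | ∃ x z, innA x z = a}).topologicalClosure = ⊤
  innB_full : (Submodule.span ℂ {b : B | ∃ x z, innB x z = b}).topologicalClosure = ⊤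

variable {A : Type*} [NormedRing A] [StarRing A] [CStarRing A] [NormedAlgebra ℂ A]
  [CompleteSpace A] [StarModule ℂ A]
variable {C : Type*} [NormedRing C] [StarRing C] [CStarRing C] [NormedAlgebra ℂ C]
  [CompleteSpace C] [StarModule ℂ C]
variable {B : Type*} [NormedRing B] [StarRing B] [CStarRing B] [NormedAlgebra ℂ B]
  [CompleteSpace B] [StarModule ℂ B]
variable {D : Type*} [NormedRing D] [StarRing D] [CStarRing D] [NormedAlgebra ℂ D]
  [CompleteSpace D] [StarModule ℂ D]
variable {X : Type*} [NormedAddCommGroup X] [NormedSpace ℂ X]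
variable {Y : Type*} [NormedAddCommGroup Y] [NormedSpace ℂ Y] [CompleteSpace Y]


namespace MoritaPair

variable (M : MoritaPair A C B D X Y)

private lemma sq_le_helper {a b : ℝ} (ha : 0 ≤ a) (hb : 0 ≤ b) (h : a ^ 2 ≤ b ^ 2) :
    a ≤ b := by nlinarith

lemma incl_injective : Function.Injective M.incl := by
  intro x y h
  have h2 : ‖x - y‖ = 0 := by rw [← M.incl_norm, map_sub, h, sub_self, norm_zero]
  exact sub_eq_zero.mp (norm_eq_zero.mp h2)

lemma iotaB_injective : Function.Injective M.ιB := M.ιB_isometry.injective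

lemma iotaA_injective : Function.Injective M.ιA := M.ιA_isometry.injective

lemma iotaB_norm (b : B) : ‖M.ιB b‖ = ‖b‖ :=
  M.ιB_isometry.norm_map_of_map_zero (map_zero _) b

lemma iotaA_norm (a : A) : ‖M.ιA a‖ = ‖a‖ :=
  M.ιA_isometry.norm_map_of_map_zero (map_zero _) a

/-! ### D-level derived lemmas -/

lemma smul_eq_rD (z : ℂ) (y : Y) : z • y = M.rD y (z • 1) := by
  rw [M.rD_smul, M.rD_one]

lemma rD_smul_left (z : ℂ) (y : Y) (d : D) : M.rD (z • y) d = z • M.rD y d := by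
  rw [M.smul_eq_rD z y, ← M.rD_mul, smul_mul_assoc, one_mul, M.rD_smul]

lemma innD_smul_right (z : ℂ) (y w : Y) : M.innD y (z • w) = z • M.innD y w := by
  rw [M.smul_eq_rD z w, M.innD_rD, mul_smul_comm, mul_one]

lemma innD_add_left (y y' z : Y) :
    M.innD (y + y') z = M.innD y z + M.innD y' z := by
  calc M.innD (y + y') z = star (M.innD z (y + y')) := (M.innD_star _ _).symm
    _ = star (M.innD z y + M.innD z y') := by rw [M.innD_add_right]
    _ = star (M.innD z y) + star (M.innD z y') := star_add _ _
    _ = M.innD y z + M.innD y' z := by rw [M.innD_star, M.innD_star]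

lemma innD_smul_left (z : ℂ) (y w : Y) :
    M.innD (z • y) w = star z • M.innD y w := by
  calc M.innD (z • y) w = star (M.innD w (z • y)) := (M.innD_star _ _).symm
    _ = star (z • M.innD w y) := by rw [M.innD_smul_right]
    _ = star z • star (M.innD w y) := star_smul _ _
    _ = star z • M.innD y w := by rw [M.innD_star]

lemma innD_rD_left (y w : Y) (d : D) :
    M.innD (M.rD y d) w = star d * M.innD y w := by
  calc M.innD (M.rD y d) w = star (M.innD w (M.rD y d)) := (M.innD_star _ _).symm
    _ = star (M.innD w y * d) := by rw [M.innD_rD]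
    _ = star d * star (M.innD w y) := star_mul _ _
    _ = star d * M.innD y w := by rw [M.innD_star]

lemma norm_rD_le (y : Y) (d : D) : ‖M.rD y d‖ ≤ ‖y‖ * ‖d‖ := by
  have h : M.innD (M.rD y d) (M.rD y d) = star d * (M.innD y y * d) := by
    rw [M.innD_rD_left, M.innD_rD]
  have h2 : ‖M.rD y d‖ ^ 2 ≤ (‖y‖ * ‖d‖) ^ 2 := by
    rw [← M.innD_norm, h]
    calc ‖star d * (M.innD y y * d)‖ ≤ ‖star d‖ * ‖M.innD y y * d‖ := norm_mul_le _ _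
      _ ≤ ‖star d‖ * (‖M.innD y y‖ * ‖d‖) := by
          gcongr; exact norm_mul_le _ _
      _ = ‖d‖ * (‖y‖ ^ 2 * ‖d‖) := by rw [norm_star, M.innD_norm]
      _ = (‖y‖ * ‖d‖) ^ 2 := by ring
  exact sq_le_helper (norm_nonneg _) (mul_nonneg (norm_nonneg _) (norm_nonneg _)) h2

/-! ### C-level derived lemmas -/

lemma smul_eq_lC (z : ℂ) (y : Y) : z • y = M.lC (z • 1) y := by
  rw [M.lC_smul, M.lC_one]

lemma innC_smul_left (z : ℂ) (y w : Y) : M.innC (z • y) w = z • M.innC y w := by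
  rw [M.smul_eq_lC z y, M.innC_lC, smul_mul_assoc, one_mul]

lemma innC_neg_left (y w : Y) : M.innC (-y) w = -(M.innC y w) := by
  have h : (-y) = (-1 : ℂ) • y := by rw [neg_one_smul]
  rw [h, M.innC_smul_left, neg_one_smul]

lemma innC_sub_left (y y' w : Y) :
    M.innC (y - y') w = M.innC y w - M.innC y' w := by
  rw [sub_eq_add_neg, M.innC_add_left, M.innC_neg_left, ← sub_eq_add_neg]

lemma innC_zero_left (w : Y) : M.innC 0 w = 0 := by
  have h := M.innC_sub_left 0 0 w
  simpa using h

/-- Nondegeneracy of the left `C`-action on `Y`. -/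
lemma ext_C {c c' : C} (h : ∀ y, M.lC c y = M.lC c' y) : c = c' := by
  have hmem : (1 : C) ∈ closure ((Submodule.span ℂ {c : C | ∃ y z, M.innC y z = c} : Submodule ℂ C) : Set C) := by
    have h1 : (1 : C) ∈ (Submodule.span ℂ {c : C | ∃ y z, M.innC y z = c}).topologicalClosure :=
      M.innC_full ▸ Submodule.mem_top
    exact h1
  have hspan : ∀ g ∈ (Submodule.span ℂ {c : C | ∃ y z, M.innC y z = c} : Submodule ℂ C),
      c * g = c' * g := by
    intro g hg
    induction hg using Submodule.span_induction with
    | mem g hgmem =>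
        obtain ⟨y, z, rfl⟩ := hgmem
        rw [← M.innC_lC, ← M.innC_lC, h y]
    | zero => simp
    | add g g' _ _ ihg ihg' => rw [mul_add, mul_add, ihg, ihg']
    | smul a g _ ihg => rw [mul_smul_comm, mul_smul_comm, ihg]
  have hclosed : IsClosed {g : C | c * g = c' * g} :=
    isClosed_eq (continuous_const.mul continuous_id) (continuous_const.mul continuous_id)
  have hsub : closure ((Submodule.span ℂ {c : C | ∃ y z, M.innC y z = c} : Submodule ℂ C) : Set C)
      ⊆ {g : C | c * g = c' * g} := closure_minimal hspan hclosed
  have := hsub hmem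
  simpa using this

lemma innC_rD_right (y z : Y) (d : D) :
    M.innC (M.rD y d) z = M.innC y (M.rD z (star d)) := by
  apply M.ext_C
  intro w
  rw [M.imprimitivity, M.imprimitivity, ← M.rD_mul, M.innD_rD_left, star_star, M.rD_mul]

/-! ### X-level derived lemmas: the `B`-valued inner product -/

lemma iotaB_innB (x z : X) : M.ιB (M.innB x z) = M.innD (M.incl x) (M.incl z) :=
  M.innB_compat x z

lemma innB_star (x z : X) : star (M.innB x z) = M.innB z x := by
  apply M.iotaB_injective
  rw [map_star, M.iotaB_innB, M.iotaB_innB, M.innD_star]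

lemma innB_add_right (x z z' : X) :
    M.innB x (z + z') = M.innB x z + M.innB x z' := by
  apply M.iotaB_injective
  rw [map_add, M.iotaB_innB, M.iotaB_innB, M.iotaB_innB, map_add, M.innD_add_right]

lemma innB_add_left (x x' z : X) :
    M.innB (x + x') z = M.innB x z + M.innB x' z := by
  apply M.iotaB_injective
  rw [map_add, M.iotaB_innB, M.iotaB_innB, M.iotaB_innB, map_add, M.innD_add_left]

lemma innB_smul_right (z : ℂ) (x w : X) :
    M.innB x (z • w) = z • M.innB x w := by
  apply M.iotaB_injective
  rw [map_smul, M.iotaB_innB, M.iotaB_innB, map_smul, M.innD_smul_right]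

lemma innB_smul_left (z : ℂ) (x w : X) :
    M.innB (z • x) w = star z • M.innB x w := by
  apply M.iotaB_injective
  rw [map_smul, M.iotaB_innB, M.iotaB_innB, map_smul, M.innD_smul_left]

lemma innB_zero_left (w : X) : M.innB 0 w = 0 := by
  have h := M.innB_add_left 0 0 w
  simpa using h.symm

lemma innB_zero_right (x : X) : M.innB x 0 = 0 := by
  have h := M.innB_add_right x 0 0
  simpa using h.symm

lemma innB_self_norm (x : X) : ‖M.innB x x‖ = ‖x‖ ^ 2 := by
  rw [← M.iotaB_norm, M.iotaB_innB, M.innD_norm, M.incl_norm]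

lemma innB_rB_right (x z : X) (c : B) :
    M.innB x (M.rB z c) = M.innB x z * c := by
  apply M.iotaB_injective
  rw [map_mul, M.iotaB_innB, M.iotaB_innB, M.rB_compat, M.innD_rD]

lemma innB_rB_left (x w : X) (c : B) :
    M.innB (M.rB x c) w = star c * M.innB x w := by
  rw [← M.innB_star, M.innB_rB_right, star_mul, M.innB_star]

lemma rB_add_left (x x' : X) (c : B) :
    M.rB (x + x') c = M.rB x c + M.rB x' c := by
  apply M.incl_injective
  rw [map_add, M.rB_compat, M.rB_compat, M.rB_compat, map_add, M.rD_add_left]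

lemma rB_smul_left (z : ℂ) (x : X) (c : B) :
    M.rB (z • x) c = z • M.rB x c := by
  apply M.incl_injective
  rw [map_smul, M.rB_compat, M.rB_compat, map_smul, M.rD_smul_left]

lemma rB_mul_right (x : X) (c c' : B) :
    M.rB x (c * c') = M.rB (M.rB x c) c' := by
  apply M.incl_injective
  rw [M.rB_compat, M.rB_compat, M.rB_compat, map_mul, M.rD_mul]

lemma norm_rB_le (x : X) (c : B) : ‖M.rB x c‖ ≤ ‖c‖ * ‖x‖ := by
  have h : M.innB (M.rB x c) (M.rB x c) = star c * (M.innB x x * c) := by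
    rw [M.innB_rB_left, M.innB_rB_right]
  have h2 : ‖M.rB x c‖ ^ 2 ≤ (‖c‖ * ‖x‖) ^ 2 := by
    rw [← M.innB_self_norm, h]
    calc ‖star c * (M.innB x x * c)‖ ≤ ‖star c‖ * ‖M.innB x x * c‖ := norm_mul_le _ _
      _ ≤ ‖star c‖ * (‖M.innB x x‖ * ‖c‖) := by gcongr; exact norm_mul_le _ _
      _ = ‖c‖ * (‖x‖ ^ 2 * ‖c‖) := by rw [norm_star, M.innB_self_norm]
      _ = (‖c‖ * ‖x‖) ^ 2 := by ring
  exact sq_le_helper (norm_nonneg _) (mul_nonneg (norm_nonneg _) (norm_nonneg _)) h2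

/-! ### Cauchy–Schwarz with a crude constant -/

lemma cs_symm_bound (x w : X) :
    ‖M.innB x w + M.innB w x‖ ≤ 2 * (‖x‖ + ‖w‖) ^ 2 := by
  have hexp : M.innB (x + w) (x + w)
      = M.innB x x + (M.innB x w + M.innB w x) + M.innB w w := by
    rw [M.innB_add_left, M.innB_add_right, M.innB_add_right]; abel
  have h1 : M.innB x w + M.innB w x
      = M.innB (x + w) (x + w) - M.innB x x - M.innB w w := by
    rw [hexp]; abel
  rw [h1]
  have h2 : ‖M.innB (x + w) (x + w) - M.innB x x - M.innB w w‖
      ≤ ‖M.innB (x + w) (x + w)‖ + ‖M.innB x x‖ + ‖M.innB w w‖ := by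
    calc ‖M.innB (x + w) (x + w) - M.innB x x - M.innB w w‖
        ≤ ‖M.innB (x + w) (x + w) - M.innB x x‖ + ‖M.innB w w‖ := norm_sub_le _ _
      _ ≤ ‖M.innB (x + w) (x + w)‖ + ‖M.innB x x‖ + ‖M.innB w w‖ := by
          gcongr; exact norm_sub_le _ _
  refine h2.trans ?_
  rw [M.innB_self_norm, M.innB_self_norm, M.innB_self_norm]
  have h3 : ‖x + w‖ ≤ ‖x‖ + ‖w‖ := norm_add_le _ _
  nlinarith [norm_nonneg x, norm_nonneg w, norm_nonneg (x + w)]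

lemma cs_unit_bound (x w : X) (hx : ‖x‖ ≤ 1) (hw : ‖w‖ ≤ 1) :
    ‖M.innB x w‖ ≤ 8 := by
  have hsum : ‖M.innB x w + M.innB w x‖ ≤ 8 := by
    refine (M.cs_symm_bound x w).trans ?_
    nlinarith [norm_nonneg x, norm_nonneg w]
  have hdiffkey : M.innB x (Complex.I • w) + M.innB (Complex.I • w) x
      = Complex.I • (M.innB x w - M.innB w x) := by
    rw [M.innB_smul_right, M.innB_smul_left, Complex.star_def, Complex.conj_I,
      smul_sub]
    module
  have hdiff : ‖M.innB x w - M.innB w x‖ ≤ 8 := by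
    have h5 : ‖M.innB x (Complex.I • w) + M.innB (Complex.I • w) x‖ ≤ 8 := by
      refine (M.cs_symm_bound x (Complex.I • w)).trans ?_
      have hIw : ‖Complex.I • w‖ ≤ 1 := by
        rw [norm_smul, Complex.norm_I, one_mul]; exact hw
      nlinarith [norm_nonneg x, norm_nonneg (Complex.I • w)]
    rw [hdiffkey, norm_smul, Complex.norm_I, one_mul] at h5
    exact h5
  have hrepr : M.innB x w = (2⁻¹ : ℂ) • ((M.innB x w + M.innB w x) + (M.innB x w - M.innB w x)) := by
    module
  rw [hrepr]
  rw [norm_smul]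
  have : ‖(2⁻¹ : ℂ)‖ = 2⁻¹ := by
    rw [norm_inv, Complex.norm_ofNat]
  rw [this]
  have h6 : ‖(M.innB x w + M.innB w x) + (M.innB x w - M.innB w x)‖ ≤ 16 := by
    refine (norm_add_le _ _).trans ?_
    linarith
  linarith

lemma cs_bound (x w : X) : ‖M.innB x w‖ ≤ 8 * ‖x‖ * ‖w‖ := by
  rcases eq_or_ne x 0 with rfl | hx
  · rw [M.innB_zero_left]; simp
  rcases eq_or_ne w 0 with rfl | hw
  · rw [M.innB_zero_right]; simp
  have hxn : (0:ℝ) < ‖x‖ := norm_pos_iff.mpr hx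
  have hwn : (0:ℝ) < ‖w‖ := norm_pos_iff.mpr hw
  set xu : X := ((‖x‖ : ℂ))⁻¹ • x with hxu
  set wu : X := ((‖w‖ : ℂ))⁻¹ • w with hwu
  have hxu1 : ‖xu‖ ≤ 1 := by
    rw [hxu, norm_smul, norm_inv, Complex.norm_real, Real.norm_eq_abs,
      abs_of_pos hxn, inv_mul_cancel₀ hxn.ne']
  have hwu1 : ‖wu‖ ≤ 1 := by
    rw [hwu, norm_smul, norm_inv, Complex.norm_real, Real.norm_eq_abs,
      abs_of_pos hwn, inv_mul_cancel₀ hwn.ne']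
  have hkey : M.innB x w = (‖x‖ : ℂ) • ((‖w‖ : ℂ) • M.innB xu wu) := by
    rw [hxu, hwu, M.innB_smul_left, M.innB_smul_right]
    rw [Complex.star_def, ← Complex.ofReal_inv, Complex.conj_ofReal, Complex.ofReal_inv]
    have hx0 : (‖x‖ : ℂ) ≠ 0 := by exact_mod_cast hxn.ne'
    have hw0 : (‖w‖ : ℂ) ≠ 0 := by exact_mod_cast hwn.ne'
    simp only [smul_smul]
    rw [show (‖x‖ : ℂ) * (↑‖w‖ * ((↑‖x‖)⁻¹ * (↑‖w‖)⁻¹)) = 1 by field_simp, one_smul]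
  rw [hkey, norm_smul, norm_smul, Complex.norm_real, Complex.norm_real,
    Real.norm_eq_abs, Real.norm_eq_abs, abs_of_pos hxn, abs_of_pos hwn]
  have := M.cs_unit_bound xu wu hxu1 hwu1
  calc ‖x‖ * (‖w‖ * ‖M.innB xu wu‖) ≤ ‖x‖ * (‖w‖ * 8) := by gcongr
    _ = 8 * ‖x‖ * ‖w‖ := by ring

/-- Nondegeneracy of the right `B`-action on `X`. -/
lemma ext_B {b b' : B} (h : ∀ x, M.rB x b = M.rB x b') : b = b' := by
  have hmem : (1 : B) ∈ closure ((Submodule.span ℂ {c : B | ∃ x z, M.innB x z = c} : Submodule ℂ B) : Set B) := by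
    have h1 : (1 : B) ∈ (Submodule.span ℂ {c : B | ∃ x z, M.innB x z = c}).topologicalClosure :=
      M.innB_full ▸ Submodule.mem_top
    exact h1
  have hspan : ∀ g ∈ (Submodule.span ℂ {c : B | ∃ x z, M.innB x z = c} : Submodule ℂ B),
      g * b = g * b' := by
    intro g hg
    induction hg using Submodule.span_induction with
    | mem g hgmem =>
        obtain ⟨x, z, rfl⟩ := hgmem
        rw [← M.innB_rB_right, ← M.innB_rB_right, h z]
    | zero => simp
    | add g g' _ _ ihg ihg' => rw [add_mul, add_mul, ihg, ihg']
    | smul a g _ ihg => rw [smul_mul_assoc, smul_mul_assoc, ihg]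
  have hclosed : IsClosed {g : B | g * b = g * b'} :=
    isClosed_eq (continuous_id.mul continuous_const) (continuous_id.mul continuous_const)
  have hsub : closure ((Submodule.span ℂ {c : B | ∃ x z, M.innB x z = c} : Submodule ℂ B) : Set B)
      ⊆ {g : B | g * b = g * b'} := closure_minimal hspan hclosed
  have := hsub hmem
  simpa using this

/-! ### A-valued inner product on `X` -/

lemma iotaA_innA (x z : X) : M.ιA (M.innA x z) = M.innC (M.incl x) (M.incl z) :=
  M.innA_compat x z

lemma innA_self_norm (x : X) : ‖M.innA x x‖ = ‖x‖ ^ 2 := by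
  rw [← M.iotaA_norm, M.iotaA_innA, M.innC_norm, M.incl_norm]

lemma innA_sub_left (u u' w : X) :
    M.innA (u - u') w = M.innA u w - M.innA u' w := by
  apply M.iotaA_injective
  rw [map_sub, M.iotaA_innA, M.iotaA_innA, M.iotaA_innA, map_sub, M.innC_sub_left]

/-- Nondegeneracy of `innA` in the second slot. -/
lemma ext_X {u u' : X} (h : ∀ x', M.innA u x' = M.innA u' x') : u = u' := by
  have h1 : M.innA (u - u') (u - u') = 0 := by
    rw [M.innA_sub_left, h (u - u'), sub_self]
  have h2 : ‖u - u'‖ ^ 2 = 0 := by rw [← M.innA_self_norm, h1, norm_zero]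
  have h3 : ‖u - u'‖ = 0 := by
    have := sq_eq_zero_iff.mp h2
    exact this
  exact sub_eq_zero.mp (norm_eq_zero.mp h3)

lemma innA_rB_move (z x' : X) (b : B) :
    M.innA (M.rB z b) x' = M.innA z (M.rB x' (star b)) := by
  apply M.iotaA_injective
  rw [M.iotaA_innA, M.iotaA_innA, M.rB_compat, M.rB_compat, M.innC_rD_right,
    ← map_star]

/-! ### The right-multiplication operators -/

/-- Right multiplication by `c : B` as a continuous linear operator on `X`. -/
noncomputable def Rop (c : B) : X →L[ℂ] X :=
  LinearMap.mkContinuous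
    { toFun := fun x => M.rB x c
      map_add' := fun x x' => M.rB_add_left x x' c
      map_smul' := fun z x => M.rB_smul_left z x c }
    ‖c‖ (fun x => M.norm_rB_le x c)

@[simp] lemma Rop_apply (c : B) (x : X) : M.Rop c x = M.rB x c := rfl

lemma Rop_norm_le (c : B) : ‖M.Rop c‖ ≤ ‖c‖ :=
  LinearMap.mkContinuous_norm_le _ (norm_nonneg c) _

lemma Rop_mul (c c' : B) : M.Rop (c * c') = (M.Rop c').comp (M.Rop c) := by
  ext x
  simp [M.rB_mul_right]

lemma Rop_mul_le (c c' : B) : ‖M.Rop (c * c')‖ ≤ ‖M.Rop c'‖ * ‖M.Rop c‖ := by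
  rw [M.Rop_mul]; exact ContinuousLinearMap.opNorm_comp_le _ _

lemma Rop_pow_le (c : B) : ∀ n : ℕ, 1 ≤ n → ‖M.Rop (c ^ n)‖ ≤ ‖M.Rop c‖ ^ n := by
  intro n
  induction n with
  | zero => intro h; omega
  | succ m ih =>
      intro _
      rcases Nat.eq_zero_or_pos m with rfl | hm
      · simp
      have := ih hm
      calc ‖M.Rop (c ^ (m + 1))‖ = ‖M.Rop (c ^ m * c)‖ := by rw [pow_succ]
        _ ≤ ‖M.Rop c‖ * ‖M.Rop (c ^ m)‖ := M.Rop_mul_le _ _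
        _ ≤ ‖M.Rop c‖ * ‖M.Rop c‖ ^ m := by gcongr
        _ = ‖M.Rop c‖ ^ (m + 1) := by ring

/-- Crude norm equivalence: `‖c‖ ≤ K‖Rop c‖` for a uniform constant `K`. -/
lemma crude_bound : ∃ K : ℝ, 0 ≤ K ∧ ∀ c : B, ‖c‖ ≤ K * ‖M.Rop c‖ := by
  have hmem : (1 : B) ∈ closure ((Submodule.span ℂ {c : B | ∃ x z, M.innB x z = c} : Submodule ℂ B) : Set B) := by
    have h1 : (1 : B) ∈ (Submodule.span ℂ {c : B | ∃ x z, M.innB x z = c}).topologicalClosure :=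
      M.innB_full ▸ Submodule.mem_top
    exact h1
  obtain ⟨v, hv_mem, hv⟩ : ∃ v ∈ (Submodule.span ℂ {c : B | ∃ x z, M.innB x z = c} : Submodule ℂ B),
      dist (1 : B) v < 1/2 := by
    have := Metric.mem_closure_iff.mp hmem (1/2) (by norm_num)
    simpa using this
  have hv' : ‖(1 : B) - v‖ < 1/2 := by rwa [← dist_eq_norm]
  have hP : ∃ K0 : ℝ, 0 ≤ K0 ∧ ∀ c : B, ‖v * c‖ ≤ K0 * ‖M.Rop c‖ := by
    clear hv hv'
    induction hv_mem using Submodule.span_induction with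
    | mem g hgmem =>
        obtain ⟨x, z, rfl⟩ := hgmem
        refine ⟨8 * ‖x‖ * ‖z‖, by positivity, fun c => ?_⟩
        rw [← M.innB_rB_right]
        calc ‖M.innB x (M.rB z c)‖ ≤ 8 * ‖x‖ * ‖M.rB z c‖ := M.cs_bound _ _
          _ ≤ 8 * ‖x‖ * (‖M.Rop c‖ * ‖z‖) := by
              gcongr
              exact (M.Rop c).le_opNorm z
          _ = 8 * ‖x‖ * ‖z‖ * ‖M.Rop c‖ := by ring
    | zero => exact ⟨0, le_refl _, fun c => by simp⟩
    | add g g' _ _ ihg ihg' =>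
        obtain ⟨K1, hK1, h1⟩ := ihg
        obtain ⟨K2, hK2, h2⟩ := ihg'
        refine ⟨K1 + K2, by linarith, fun c => ?_⟩
        rw [add_mul]
        calc ‖g * c + g' * c‖ ≤ ‖g * c‖ + ‖g' * c‖ := norm_add_le _ _
          _ ≤ K1 * ‖M.Rop c‖ + K2 * ‖M.Rop c‖ := add_le_add (h1 c) (h2 c)
          _ = (K1 + K2) * ‖M.Rop c‖ := by ring
    | smul a g _ ihg =>
        obtain ⟨K1, hK1, h1⟩ := ihg
        refine ⟨‖a‖ * K1, by positivity, fun c => ?_⟩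
        rw [smul_mul_assoc, norm_smul]
        calc ‖a‖ * ‖g * c‖ ≤ ‖a‖ * (K1 * ‖M.Rop c‖) := by gcongr; exact h1 c
          _ = ‖a‖ * K1 * ‖M.Rop c‖ := by ring
  obtain ⟨K0, hK0, hK⟩ := hP
  refine ⟨2 * K0, by linarith, fun c => ?_⟩
  have hdecomp : (c : B) = ((1 : B) - v) * c + v * c := by noncomm_ring
  have h1 : ‖c‖ ≤ ‖((1 : B) - v) * c‖ + ‖v * c‖ := by
    conv_lhs => rw [hdecomp]
    exact norm_add_le _ _
  have h2 : ‖((1 : B) - v) * c‖ ≤ (1/2) * ‖c‖ := by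
    calc ‖((1 : B) - v) * c‖ ≤ ‖(1 : B) - v‖ * ‖c‖ := norm_mul_le _ _
      _ ≤ (1/2) * ‖c‖ := by
          have := norm_nonneg c
          nlinarith
  have h3 := hK c
  have h4 : (0:ℝ) ≤ ‖M.Rop c‖ := norm_nonneg _
  linarith

/-- Selfadjoint elements: sharp bound from the operator norm. -/
lemma sa_norm_le_Rop (c : B) (hc : star c = c) : ‖c‖ ≤ ‖M.Rop c‖ := by
  obtain ⟨K, hK0, hK⟩ := M.crude_bound
  have hsa_pow : ∀ n : ℕ, star (c ^ n) = c ^ n := by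
    intro n
    rw [star_pow, hc]
  have hpow : ∀ n : ℕ, ‖c ^ (2 ^ n)‖ = ‖c‖ ^ (2 ^ n) := by
    intro n
    induction n with
    | zero => simp
    | succ m ih =>
        have h1 : c ^ (2 ^ (m + 1)) = c ^ (2 ^ m) * c ^ (2 ^ m) := by
          rw [← pow_add]
          congr 1
          omega
        rw [h1]
        have h2 : ‖c ^ (2 ^ m) * c ^ (2 ^ m)‖ = ‖c ^ (2 ^ m)‖ * ‖c ^ (2 ^ m)‖ := by
          nth_rewrite 1 [← hsa_pow (2 ^ m)]
          exact CStarRing.norm_star_mul_self (x := c ^ 2 ^ m)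
        rw [h2, ih, ← pow_add]
        congr 1
        omega
  have hchain : ∀ n : ℕ, ‖c‖ ^ (2 ^ n) ≤ K * ‖M.Rop c‖ ^ (2 ^ n) := by
    intro n
    calc ‖c‖ ^ (2 ^ n) = ‖c ^ (2 ^ n)‖ := (hpow n).symm
      _ ≤ K * ‖M.Rop (c ^ (2 ^ n))‖ := hK _
      _ ≤ K * ‖M.Rop c‖ ^ (2 ^ n) := by
          gcongr
          exact M.Rop_pow_le c (2 ^ n) (Nat.one_le_two_pow)
  by_contra hcon
  push_neg at hcon
  set t := ‖M.Rop c‖ with ht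
  have ht0 : 0 ≤ t := norm_nonneg _
  have hc0 : 0 < ‖c‖ := lt_of_le_of_lt ht0 hcon
  rcases eq_or_lt_of_le ht0 with h0 | h0
  · have h00 := hchain 0
    rw [← h0] at h00
    norm_num at h00
    first
      | linarith
      | (rw [h00] at hc0; simp at hc0)
  · have hr : 1 < ‖c‖ / t := (one_lt_div h0).mpr hcon
    obtain ⟨n, hn⟩ := pow_unbounded_of_one_lt K hr
    have h2 : (‖c‖ / t) ^ n ≤ (‖c‖ / t) ^ (2 ^ n) :=
      pow_le_pow_right₀ hr.le (Nat.le_of_lt (Nat.lt_two_pow_self (n := n)))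
    have h3 : (‖c‖ / t) ^ (2 ^ n) ≤ K := by
      rw [div_pow, div_le_iff₀ (by positivity)]
      calc ‖c‖ ^ (2 ^ n) ≤ K * t ^ (2 ^ n) := hchain n
        _ = K * t ^ (2 ^ n) := rfl
    linarith

/-- The adjoint bound: `‖Rop (star c)‖ ≤ ‖Rop c‖`. -/
lemma Rop_star_le (c : B) : ‖M.Rop (star c)‖ ≤ ‖M.Rop c‖ := by
  set α := ‖M.Rop c‖ with hα
  set β := ‖M.Rop (star c)‖ with hβ
  have hα0 : 0 ≤ α := norm_nonneg _
  have hβ0 : 0 ≤ β := norm_nonneg _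
  have key : ∀ x : X, ‖M.rB x (star c)‖ ^ 2 ≤ (α * β) * ‖x‖ ^ 2 := by
    intro x
    set g := M.innB x x with hg
    have hsa : star (c * (g * star c)) = c * (g * star c) := by
      have hgs : star g = g := by rw [hg, M.innB_star]
      rw [star_mul, star_mul, star_star, hgs, mul_assoc]
    have he : M.innB (M.rB x (star c)) (M.rB x (star c)) = c * (g * star c) := by
      rw [M.innB_rB_left, M.innB_rB_right, star_star]
    have hRope : M.Rop (c * (g * star c))
        = (M.Rop (star c)).comp ((M.Rop g).comp (M.Rop c)) := by
      ext z
      simp [M.rB_mul_right]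
    have hbound : ‖c * (g * star c)‖ ≤ β * (‖x‖ ^ 2 * α) := by
      calc ‖c * (g * star c)‖ ≤ ‖M.Rop (c * (g * star c))‖ :=
            M.sa_norm_le_Rop _ hsa
        _ = ‖(M.Rop (star c)).comp ((M.Rop g).comp (M.Rop c))‖ := by rw [hRope]
        _ ≤ ‖M.Rop (star c)‖ * ‖(M.Rop g).comp (M.Rop c)‖ :=
            ContinuousLinearMap.opNorm_comp_le _ _
        _ ≤ ‖M.Rop (star c)‖ * (‖M.Rop g‖ * ‖M.Rop c‖) := by
            gcongr
            exact ContinuousLinearMap.opNorm_comp_le _ _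
        _ ≤ β * (‖g‖ * α) := by
            gcongr
            exact M.Rop_norm_le g
        _ = β * (‖x‖ ^ 2 * α) := by rw [hg, M.innB_self_norm]
    calc ‖M.rB x (star c)‖ ^ 2 = ‖M.innB (M.rB x (star c)) (M.rB x (star c))‖ :=
          (M.innB_self_norm _).symm
      _ = ‖c * (g * star c)‖ := by rw [he]
      _ ≤ β * (‖x‖ ^ 2 * α) := hbound
      _ = (α * β) * ‖x‖ ^ 2 := by ring
  have hβsqrt : β ≤ Real.sqrt (α * β) := by
    apply ContinuousLinearMap.opNorm_le_bound _ (Real.sqrt_nonneg _)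
    intro x
    have h1 : ‖M.Rop (star c) x‖ ^ 2 ≤ (Real.sqrt (α * β) * ‖x‖) ^ 2 := by
      rw [mul_pow, Real.sq_sqrt (by positivity)]
      simpa using key x
    exact sq_le_helper (norm_nonneg _)
      (mul_nonneg (Real.sqrt_nonneg _) (norm_nonneg _)) h1
  have hβ2 : β ^ 2 ≤ α * β := by
    calc β ^ 2 ≤ Real.sqrt (α * β) ^ 2 := pow_le_pow_left₀ hβ0 hβsqrt 2
      _ = α * β := Real.sq_sqrt (by positivity)
  rcases eq_or_lt_of_le hβ0 with h0 | h0
  · rw [← h0]; exact hα0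
  · nlinarith

/-- Sharp bound: the right-regular representation is isometric-from-below. -/
lemma norm_le_Rop (c : B) : ‖c‖ ≤ ‖M.Rop c‖ := by
  have h1 : ‖c‖ ^ 2 = ‖star c * c‖ := by
    rw [CStarRing.norm_star_mul_self]; ring
  have hsa : star (star c * c) = star c * c := by
    rw [star_mul, star_star]
  have h2 : ‖star c * c‖ ≤ ‖M.Rop c‖ * ‖M.Rop (star c)‖ :=
    (M.sa_norm_le_Rop _ hsa).trans (M.Rop_mul_le _ _)
  have h3 : ‖star c * c‖ ≤ ‖M.Rop c‖ ^ 2 := by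
    calc ‖star c * c‖ ≤ ‖M.Rop c‖ * ‖M.Rop (star c)‖ := h2
      _ ≤ ‖M.Rop c‖ * ‖M.Rop c‖ := by
          have hs := M.Rop_star_le c
          have h5 := norm_nonneg (M.Rop c)
          have h6 := norm_nonneg (M.Rop (star c))
          nlinarith
      _ = ‖M.Rop c‖ ^ 2 := by ring
  have h4 : ‖c‖ ^ 2 ≤ ‖M.Rop c‖ ^ 2 := by rw [h1]; exact h3
  exact sq_le_helper (norm_nonneg _) (norm_nonneg _) h4

end MoritaPair

/-- the map `ψ : D → B` defined by `x·ψ(d) = τ(x·d)` is a bounded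
`B`-bimodule linear map with `‖ψ‖ ≤ ‖τ‖`. -/
theorem stmt6 (M : MoritaPair A C B D X Y) (φ : C →L[ℂ] A)
    (hφ : ∀ (a : A) (c : C), φ (M.ιA a * c) = a * φ c ∧ φ (c * M.ιA a) = φ c * a)
    (τ : Y →L[ℂ] X)
    (hτ : ∀ (y : Y) (x : X), M.innA (τ y) x = φ (M.innC y (M.incl x)))
    (ψ : D →ₗ[ℂ] B)
    (hψ : ∀ (x : X) (d : D), M.rB x (ψ d) = τ (M.rD (M.incl x) d)) :
    (∀ (b : B) (d : D), ψ (M.ιB b * d) = b * ψ d) ∧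
    (∀ (b : B) (d : D), ψ (d * M.ιB b) = ψ d * b) ∧
    (∀ d : D, ‖ψ d‖ ≤ ‖τ‖ * ‖d‖) := by
  constructor
  · -- ψ(ιB b * d) = b * ψ d
    intro b d
    apply M.ext_B
    intro x
    have h1 : M.rB x (ψ (M.ιB b * d)) = τ (M.rD (M.incl x) (M.ιB b * d)) := hψ _ _
    rw [h1, M.rD_mul, ← M.rB_compat, ← hψ, ← M.rB_mul_right]
  constructor
  · -- ψ(d * ιB b) = ψ d * b
    intro b d
    have tau_mod : ∀ (y : Y) (b : B), τ (M.rD y (M.ιB b)) = M.rB (τ y) b := by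
      intro y b
      apply M.ext_X
      intro x'
      rw [hτ, M.innC_rD_right, ← map_star, ← M.rB_compat, ← hτ, ← M.innA_rB_move]
    apply M.ext_B
    intro x
    rw [hψ, M.rD_mul, tau_mod, ← hψ, ← M.rB_mul_right]
  · -- ‖ψ d‖ ≤ ‖τ‖ * ‖d‖
    intro d
    refine (M.norm_le_Rop (ψ d)).trans ?_
    apply ContinuousLinearMap.opNorm_le_bound _ (by positivity)
    intro x
    rw [M.Rop_apply, hψ]
    calc ‖τ (M.rD (M.incl x) d)‖ ≤ ‖τ‖ * ‖M.rD (M.incl x) d‖ := τ.le_opNorm _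
      _ ≤ ‖τ‖ * (‖M.incl x‖ * ‖d‖) := by
          gcongr
          exact M.norm_rD_le _ _
      _ = ‖τ‖ * ‖d‖ * ‖x‖ := by rw [M.incl_norm]; ring
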